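/- Let d < n be positive integers, let β ≤ n be a real number, and let A ∈ 𝒜_{n,d} be β-delocalized with rank A ≤ n−1. Then |K_A| ≥ (n − β)², where K_A = {(i,j) ∈ [n]² : i ≠ j and ker A = F_{i,j}(A)^⊥}. -/

import Mathlib

open Matrix

/-- `𝒜_{n,d}`: 0/1 matrices with exactly `d` ones in every row and column. -/
def IsRegAdj (n d : ℕ) (A : Matrix (Fin n) (Fin n) ℝ) : Prop :=
  (∀ i j, A i j = 0 ∨ A i j = 1) ∧
  (∀ i, {j : Fin n | A i j = 1}.ncard = d) ∧
  (∀ j, {i : Fin n | A i j = 1}.ncard = d)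

/-- A simple switching can be performed in `(i, j, k, l)`. -/
def CanSwitch {n : ℕ} (A : Matrix (Fin n) (Fin n) ℝ) (i j k l : Fin n) : Prop :=
  A i k = 1 ∧ A j l = 1 ∧ A i l = 0 ∧ A j k = 0

/-- The matrix obtained from `A` by the simple switching in `(i, j, k, l)`. -/
def switch {n : ℕ} (A : Matrix (Fin n) (Fin n) ℝ) (i j k l : Fin n) :
    Matrix (Fin n) (Fin n) ℝ :=
  Matrix.of fun s t =>
    if (s = i ∧ t = k) ∨ (s = j ∧ t = l) then 0
    else if (s = i ∧ t = l) ∨ (s = j ∧ t = k) then 1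
    else A s t

/-- `F_{i,j}(A)`: the span of the rows of `A` other than the `i`-th and the `j`-th,
together with `R_i + R_j`. -/
def rowSpanF {n : ℕ} (A : Matrix (Fin n) (Fin n) ℝ) (i j : Fin n) :
    Submodule ℝ (Fin n → ℝ) :=
  Submodule.span ℝ (insert (A i + A j) {r : Fin n → ℝ | ∃ s, s ≠ i ∧ s ≠ j ∧ r = A s})

/-- Orthogonal complement w.r.t. the standard inner product on `ℝⁿ`. -/
def perp {n : ℕ} (F : Submodule ℝ (Fin n → ℝ)) : Submodule ℝ (Fin n → ℝ) where
  carrier := {x | ∀ v ∈ F, v ⬝ᵥ x = 0}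
  zero_mem' := by intro v hv; simp
  add_mem' := by intro a b ha hb v hv; simp [dotProduct_add, ha v hv, hb v hv]
  smul_mem' := by intro c x hx v hv; simp [dotProduct_smul, hx v hv]

/-- `A` is `β`-delocalized: no level set of a nonzero null vector (of `A` or `Aᵀ`)
has more than `β` coordinates. -/
def Delocalized {n : ℕ} (β : ℝ) (A : Matrix (Fin n) (Fin n) ℝ) : Prop :=
  ∀ x : Fin n → ℝ, x ≠ 0 →
    (x ∈ LinearMap.ker A.mulVecLin ∨ x ∈ LinearMap.ker Aᵀ.mulVecLin) →
    ∀ lam : ℝ, ({i : Fin n | x i = lam}.ncard : ℝ) ≤ β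

lemma mem_perp_iff {n : ℕ} (F : Submodule ℝ (Fin n → ℝ)) (x : Fin n → ℝ) :
    x ∈ perp F ↔ ∀ v ∈ F, v ⬝ᵥ x = 0 := Iff.rfl

lemma key_lemma {n : ℕ} (A : Matrix (Fin n) (Fin n) ℝ) (y : Fin n → ℝ)
    (hy : Aᵀ.mulVec y = 0) (i j : Fin n) (hij : y i ≠ y j) :
    LinearMap.ker A.mulVecLin = perp (rowSpanF A i j) := by
  have hji : j ≠ i := fun h => hij (by rw [h])
  have hne : y j - y i ≠ 0 := sub_ne_zero.mpr (Ne.symm hij)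
  set z : Fin n → ℝ := fun s => (y j - y i)⁻¹ * y s with hz_def
  have hz : ∀ t, ∑ s, z s * A s t = 0 := by
    intro t
    have h0 : (Aᵀ.mulVec y) t = 0 := by rw [hy]; rfl
    simp only [Matrix.mulVec, dotProduct, Matrix.transpose_apply] at h0
    have h1 : ∑ s, y s * A s t = 0 := by
      rw [← h0]; apply Finset.sum_congr rfl; intro s _; ring
    calc ∑ s, z s * A s t = (y j - y i)⁻¹ * ∑ s, y s * A s t := by
          rw [Finset.mul_sum]; apply Finset.sum_congr rfl; intro s _; simp [hz_def]; ring
      _ = 0 := by rw [h1, mul_zero]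
  have hz1 : z j - z i = 1 := by
    simp only [hz_def]
    rw [← mul_sub, inv_mul_cancel₀ hne]
  -- the key identity : A i ∈ rowSpanF A i j
  have hmemF : ∀ s : Fin n, s ≠ i → s ≠ j → A s ∈ rowSpanF A i j := by
    intro s hsi hsj
    exact Submodule.subset_span (Set.mem_insert_of_mem _ ⟨s, hsi, hsj, rfl⟩)
  have hmemIJ : A i + A j ∈ rowSpanF A i j :=
    Submodule.subset_span (Set.mem_insert _ _)
  have hAi : A i ∈ rowSpanF A i j := by
    have hid : A i = z j • (A i + A j) +
        ∑ s ∈ (Finset.univ.erase i).erase j, z s • A s := by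
      funext t
      have h2 : ∑ s ∈ (Finset.univ.erase i).erase j, z s * A s t
          = (∑ s, z s * A s t) - z i * A i t - z j * A j t := by
        rw [Finset.sum_erase_eq_sub (Finset.mem_erase.mpr ⟨hji, Finset.mem_univ j⟩),
          Finset.sum_erase_eq_sub (Finset.mem_univ i)]
      have h3 : (∑ s ∈ (Finset.univ.erase i).erase j, z s • A s) t
          = ∑ s ∈ (Finset.univ.erase i).erase j, z s * A s t := by
        simp [Finset.sum_apply]
      simp only [Pi.add_apply, Pi.smul_apply, smul_eq_mul, h3, h2, hz t]
      linear_combination (-(A i t)) * hz1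
    rw [hid]
    exact Submodule.add_mem _ (Submodule.smul_mem _ _ hmemIJ)
      (Submodule.sum_mem _ (fun s hs => by
        obtain ⟨hsj, hsi⟩ := by
          simpa [Finset.mem_erase] using hs
        exact Submodule.smul_mem _ _ (hmemF s hsi hsj)))
  have hAj : A j ∈ rowSpanF A i j := by
    have : A j = (A i + A j) - A i := by ring
    rw [this]; exact Submodule.sub_mem _ hmemIJ hAi
  ext x
  rw [LinearMap.mem_ker, mem_perp_iff]
  constructor
  · intro hx v hv
    have hx' : ∀ s, A s ⬝ᵥ x = 0 := by
      intro s
      have := congrFun (show A.mulVec x = 0 from hx) s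
      simpa [Matrix.mulVec] using this
    induction hv using Submodule.span_induction with
    | mem v hv =>
      rcases hv with rfl | ⟨s, -, -, rfl⟩
      · rw [add_dotProduct, hx' i, hx' j, add_zero]
      · exact hx' s
    | zero => simp
    | add a b _ _ ha hb => rw [add_dotProduct, ha, hb, add_zero]
    | smul c a _ ha => rw [smul_dotProduct, ha, smul_zero]
  · intro hx
    have hrows : ∀ s, A s ⬝ᵥ x = 0 := by
      intro s
      by_cases hsi : s = i
      · subst hsi; exact hx _ hAi
      by_cases hsj : s = j
      · subst hsj; exact hx _ hAj
      · exact hx _ (hmemF s hsi hsj)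
    ext s
    simpa [Matrix.mulVecLin_apply, Matrix.mulVec] using hrows s

/-- for a singular β-delocalized matrix, `|K_A| ≥ (n - β)²`. -/
theorem stmt_7 (n d : ℕ) (hd : 0 < d) (hdn : d < n) (β : ℝ) (hβ : β ≤ n)
    (A : Matrix (Fin n) (Fin n) ℝ) (hA : IsRegAdj n d A)
    (hdel : Delocalized β A) (hrk : A.rank ≤ n - 1) :
    ((n : ℝ) - β) ^ 2 ≤
      ({p : Fin n × Fin n | p.1 ≠ p.2 ∧
          LinearMap.ker A.mulVecLin = perp (rowSpanF A p.1 p.2)}.ncard : ℝ) := by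
  have hn : 0 < n := lt_trans hd hdn
  -- obtain a nonzero left kernel vector
  have hker_pos : 0 < Module.finrank ℝ (LinearMap.ker Aᵀ.mulVecLin) := by
    have h1 := LinearMap.finrank_range_add_finrank_ker (Aᵀ.mulVecLin)
    have h2 : Module.finrank ℝ (LinearMap.range Aᵀ.mulVecLin) = Aᵀ.rank := rfl
    have h3 : Aᵀ.rank = A.rank := Matrix.rank_transpose A
    have h4 : Module.finrank ℝ (Fin n → ℝ) = n := Module.finrank_fin_fun ℝ
    rw [h2, h3, h4] at h1
    omega
  have hker_ne : LinearMap.ker Aᵀ.mulVecLin ≠ ⊥ := by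
    intro h
    rw [h, finrank_bot] at hker_pos
    exact lt_irrefl 0 hker_pos
  obtain ⟨y, hyker, hy0⟩ := Submodule.exists_mem_ne_zero_of_ne_bot hker_ne
  have hy : Aᵀ.mulVec y = 0 := hyker
  -- delocalization bounds for y
  have hlev : ∀ lam : ℝ, ((Finset.univ.filter fun t : Fin n => y t = lam).card : ℝ) ≤ β := by
    intro lam
    have := hdel y hy0 (Or.inr hyker) lam
    have he : {t : Fin n | y t = lam} = ↑(Finset.univ.filter fun t : Fin n => y t = lam) := by
      ext t; simp
    rwa [he, Set.ncard_coe_finset] at this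
  have hβ0 : (1 : ℝ) ≤ β := by
    have i0 : Fin n := ⟨0, hn⟩
    have h1 := hlev (y i0)
    have : (1 : ℝ) ≤ ((Finset.univ.filter fun t : Fin n => y t = y i0).card : ℝ) := by
      have : 0 < (Finset.univ.filter fun t : Fin n => y t = y i0).card :=
        Finset.card_pos.mpr ⟨i0, by simp⟩
      exact_mod_cast this
    linarith
  -- the finset of good pairs
  set K : Set (Fin n × Fin n) := {p : Fin n × Fin n | p.1 ≠ p.2 ∧
      LinearMap.ker A.mulVecLin = perp (rowSpanF A p.1 p.2)} with hK
  set T : Finset (Fin n × Fin n) := Finset.univ.filter fun p => y p.1 ≠ y p.2 with hT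
  have hsub : (↑T : Set (Fin n × Fin n)) ⊆ K := by
    intro p hp
    have hp' : y p.1 ≠ y p.2 := by simpa [hT] using hp
    refine ⟨fun h => hp' (by rw [h]), key_lemma A y hy p.1 p.2 hp'⟩
  -- counting
  have hcard : T.card = ∑ i : Fin n, (Finset.univ.filter fun t : Fin n => y i ≠ y t).card := by
    rw [hT, Finset.card_filter, ← Finset.univ_product_univ, Finset.sum_product]
    simp [Finset.card_filter]
  have hper : ∀ i : Fin n,
      ((n : ℝ) - β) ≤ ((Finset.univ.filter fun t : Fin n => y i ≠ y t).card : ℝ) := by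
    intro i
    have hsplit := Finset.card_filter_add_card_filter_not
      (s := Finset.univ) (p := fun t : Fin n => y t = y i)
    simp only [Finset.card_univ, Fintype.card_fin] at hsplit
    have h1 := hlev (y i)
    have h2 : (Finset.univ.filter fun t : Fin n => y i ≠ y t)
        = Finset.univ.filter fun t : Fin n => ¬ (y t = y i) := by
      apply Finset.filter_congr; intro t _; constructor
      · exact fun h h' => h h'.symm
      · exact fun h h' => h h'.symm
    rw [h2]
    have := hsplit
    have hcast : ((Finset.univ.filter fun t : Fin n => y t = y i).card : ℝ)
        + ((Finset.univ.filter fun t : Fin n => ¬ (y t = y i)).card : ℝ) = n := by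
      exact_mod_cast congrArg (Nat.cast : ℕ → ℝ) this
    linarith
  have hTcard : (n : ℝ) * ((n : ℝ) - β) ≤ (T.card : ℝ) := by
    have : (T.card : ℝ) = ∑ i : Fin n,
        ((Finset.univ.filter fun t : Fin n => y i ≠ y t).card : ℝ) := by
      rw [hcard]; push_cast; ring
    rw [this]
    calc (n : ℝ) * ((n : ℝ) - β) = ∑ _i : Fin n, ((n : ℝ) - β) := by
          rw [Finset.sum_const, Finset.card_univ, Fintype.card_fin, nsmul_eq_mul]
      _ ≤ _ := Finset.sum_le_sum fun i _ => hper i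
  have hKcard : (T.card : ℝ) ≤ (K.ncard : ℝ) := by
    have := Set.ncard_le_ncard hsub (Set.toFinite K)
    rw [Set.ncard_coe_finset] at this
    exact_mod_cast this
  nlinarith [hβ0, hβ, hTcard, hKcard]
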